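/- Let U_λ = I_W + λu with u ∈ L²_a(μ,H), suppose U_λ is μ-a.s. invertible for every λ < 1, the densities L_λ = d(U_λμ)/dμ converge in probability to L₁ as λ → 1, and the family {L_λ log L_λ : λ < 1} is uniformly integrable. Then E[L₁ log L₁] = (1/2)E[|u|²_H], and hence U₁ = I_W + u is μ-a.s. invertible. -/

import Mathlib

open MeasureTheory Filter
open scoped ENNReal NNReal

noncomputable section

/-- Path space `W = C₀([0,1],ℝ^d)` modelled as functions `ℝ → ℝ^d` with the product
σ-algebra. -/
abbrev WPath (d : ℕ) := ℝ → EuclideanSpace ℝ (Fin d)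

/-- `μ`-a.s. invertibility of a map `T` on path space, with inverse having absolutely
continuous image measure. -/
def AlmostSurelyInvertible {d : ℕ} (μ : Measure (WPath d)) (T : WPath d → WPath d) : Prop :=
  ∃ V : WPath d → WPath d, Measurable V ∧ Measure.map V μ ≪ μ ∧
    ∀ᵐ w ∂μ, T (V w) = w ∧ V (T w) = w

/-- Elementary bound: `|x log x| ≤ 1 + M²` for `0 ≤ x ≤ M`, `1 ≤ M`. -/
lemma abs_mul_log_le_aux {M x : ℝ} (hM : 1 ≤ M) (hx0 : 0 ≤ x) (hxM : x ≤ M) :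
    |x * Real.log x| ≤ 1 + M ^ 2 := by
  rcases le_or_gt x 1 with h1 | h1
  · rcases eq_or_lt_of_le hx0 with h0 | h0
    · simp [← h0]; positivity
    · have h := Real.abs_log_mul_self_lt x h0 h1
      have h2 : |x * Real.log x| = |Real.log x * x| := by rw [mul_comm]
      nlinarith [sq_nonneg M]
  · have hlog : Real.log x ≤ x - 1 := Real.log_le_sub_one_of_pos (by linarith)
    have hlognn : 0 ≤ Real.log x := Real.log_nonneg h1.le
    rw [abs_of_nonneg (by positivity)]
    nlinarith

/-- Key uniform bound: under the mass condition and the uniform-integrability bound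
(for `ε = 1`), the entropy integrand has `∫⁻‖·‖₊ ≤ 2 + M²`. -/
lemma lintegral_nnnorm_mul_log_le_aux {α : Type*} [MeasurableSpace α] (μ : Measure α)
    [IsProbabilityMeasure μ] (Lf : α → ℝ) (hLm : Measurable Lf) (hLnn : ∀ w, 0 ≤ Lf w)
    (hmass : ∫⁻ w, ENNReal.ofReal (Lf w) ∂μ = 1)
    {M δ : ℝ} (hM1 : 1 ≤ M) (hMδ : 1 / M ≤ δ)
    (hui : ∀ s : Set α, MeasurableSet s → μ s ≤ ENNReal.ofReal δ →
      ∫ w in s, |Lf w * Real.log (Lf w)| ∂μ ≤ 1) :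
    ∫⁻ w, ‖Lf w * Real.log (Lf w)‖₊ ∂μ ≤ ENNReal.ofReal (2 + M ^ 2) := by
  have hMpos : (0:ℝ) < M := lt_of_lt_of_le one_pos hM1
  set F : α → ℝ := fun w => Lf w * Real.log (Lf w) with hFdef
  have hFm : Measurable F := hLm.mul (Real.measurable_log.comp hLm)
  set A : Set α := {w | M ≤ Lf w} with hAdef
  have hA : MeasurableSet A := measurableSet_le measurable_const hLm
  -- Markov inequality:  μ A ≤ δ
  have hμA : μ A ≤ ENNReal.ofReal δ := by
    have hAeq : A = {w | ENNReal.ofReal M ≤ ENNReal.ofReal (Lf w)} := by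
      ext w
      simp [hAdef, ENNReal.ofReal_le_ofReal_iff (hLnn w)]
    have h1 : μ A ≤ (∫⁻ w, ENNReal.ofReal (Lf w) ∂μ) / ENNReal.ofReal M := by
      rw [hAeq]
      exact meas_ge_le_lintegral_div hLm.ennreal_ofReal.aemeasurable
        (by simp [ENNReal.ofReal_pos.2 hMpos, (ENNReal.ofReal_pos.2 hMpos).ne'])
        (by simp)
    have h2 : (1:ℝ≥0∞) / ENNReal.ofReal M = ENNReal.ofReal (1 / M) := by
      rw [ENNReal.ofReal_div_of_pos hMpos, ENNReal.ofReal_one]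
    rw [hmass] at h1
    exact h1.trans (by rw [h2]; exact ENNReal.ofReal_le_ofReal hMδ)
  -- bound on the complement of A
  have hcompl : ∫⁻ w in Aᶜ, (‖F w‖₊ : ℝ≥0∞) ∂μ ≤ ENNReal.ofReal (1 + M ^ 2) := by
    have hle : ∀ w ∈ Aᶜ, (‖F w‖₊ : ℝ≥0∞) ≤ ENNReal.ofReal (1 + M ^ 2) := by
      intro w hw
      have hwM : Lf w ≤ M := le_of_not_ge hw
      rw [← enorm_eq_nnnorm, ← ofReal_norm]
      exact ENNReal.ofReal_le_ofReal
        (by rw [Real.norm_eq_abs]; exact abs_mul_log_le_aux hM1 (hLnn w) hwM)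
    calc ∫⁻ w in Aᶜ, (‖F w‖₊ : ℝ≥0∞) ∂μ
        ≤ ∫⁻ _ in Aᶜ, ENNReal.ofReal (1 + M ^ 2) ∂μ := setLIntegral_mono measurable_const hle
      _ = ENNReal.ofReal (1 + M ^ 2) * μ Aᶜ := setLIntegral_const _ _
      _ ≤ ENNReal.ofReal (1 + M ^ 2) * 1 := by gcongr; exact prob_le_one
      _ = ENNReal.ofReal (1 + M ^ 2) := mul_one _
  -- bound on A, via monotone convergence and the uniform integrability bound
  have hApart : ∫⁻ w in A, (‖F w‖₊ : ℝ≥0∞) ∂μ ≤ ENNReal.ofReal 1 := by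
    set s : ℕ → Set α := fun k => A ∩ {w | Lf w ≤ (k : ℝ)} with hsdef
    have hsm : ∀ k, MeasurableSet (s k) := fun k =>
      hA.inter (measurableSet_le hLm measurable_const)
    have hsub : ∀ k, s k ⊆ A := fun k => Set.inter_subset_left
    have hsA : ∀ k, μ (s k) ≤ ENNReal.ofReal δ := fun k =>
      (measure_mono (hsub k)).trans hμA
    have hint : ∀ k, Integrable F (μ.restrict (s k)) := by
      intro k
      have hMk : (1:ℝ) ≤ max 1 (k:ℝ) := le_max_left _ _
      refine Integrable.mono' (integrable_const (1 + (max 1 (k:ℝ)) ^ 2))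
        hFm.aestronglyMeasurable ?_
      refine (ae_restrict_iff' (hsm k)).2 (ae_of_all _ fun w hw => ?_)
      have hk : Lf w ≤ max 1 (k:ℝ) := le_trans hw.2 (le_max_right _ _)
      rw [Real.norm_eq_abs]
      exact abs_mul_log_le_aux hMk (hLnn w) hk
    have hsk : ∀ k, ∫⁻ w in s k, (‖F w‖₊ : ℝ≥0∞) ∂μ ≤ ENNReal.ofReal 1 := by
      intro k
      simp_rw [← enorm_eq_nnnorm]
      rw [← ofReal_integral_norm_eq_lintegral_enorm (hint k)]
      refine ENNReal.ofReal_le_ofReal ?_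
      simpa only [Real.norm_eq_abs] using hui (s k) (hsm k) (hsA k)
    have hmono : Monotone fun k => (s k).indicator fun w => (‖F w‖₊ : ℝ≥0∞) := by
      intro i j hij
      refine fun w => Set.indicator_le_indicator_of_subset ?_ (fun _ => zero_le) w
      exact Set.inter_subset_inter_right _ fun w hw =>
        show Lf w ≤ (j : ℝ) from le_trans hw (by exact_mod_cast hij)
    have hsupeq : ∀ w, (⨆ k, (s k).indicator (fun w => (‖F w‖₊ : ℝ≥0∞)) w)
        = A.indicator (fun w => (‖F w‖₊ : ℝ≥0∞)) w := by
      intro w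
      by_cases hw : w ∈ A
      · obtain ⟨k, hk⟩ := exists_nat_ge (Lf w)
        apply le_antisymm
        · exact iSup_le fun j =>
            Set.indicator_le_indicator_of_subset (hsub j) (fun _ => zero_le) w
        · have hmem : w ∈ s k := ⟨hw, hk⟩
          have h1 : A.indicator (fun w => (‖F w‖₊ : ℝ≥0∞)) w = (‖F w‖₊ : ℝ≥0∞) :=
            Set.indicator_of_mem hw _
          have h2 : (s k).indicator (fun w => (‖F w‖₊ : ℝ≥0∞)) w = (‖F w‖₊ : ℝ≥0∞) :=
            Set.indicator_of_mem hmem _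
          rw [h1, ← h2]
          exact le_iSup (fun k => (s k).indicator (fun w => (‖F w‖₊ : ℝ≥0∞)) w) k
      · have h1 : ∀ k, w ∉ s k := fun k h => hw (hsub k h)
        simp [Set.indicator_of_notMem, hw, h1]
    calc ∫⁻ w in A, (‖F w‖₊ : ℝ≥0∞) ∂μ
        = ∫⁻ w, A.indicator (fun w => (‖F w‖₊ : ℝ≥0∞)) w ∂μ :=
          (lintegral_indicator hA _).symm
      _ = ∫⁻ w, ⨆ k, (s k).indicator (fun w => (‖F w‖₊ : ℝ≥0∞)) w ∂μ := by
          refine lintegral_congr fun w => (hsupeq w).symm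
      _ = ⨆ k, ∫⁻ w, (s k).indicator (fun w => (‖F w‖₊ : ℝ≥0∞)) w ∂μ :=
          lintegral_iSup
            (fun k => (hFm.nnnorm.coe_nnreal_ennreal).indicator (hsm k)) hmono
      _ ≤ ENNReal.ofReal 1 := iSup_le fun k => by
          rw [lintegral_indicator (hsm k)]; exact hsk k
  calc ∫⁻ w, (‖F w‖₊ : ℝ≥0∞) ∂μ
      = ∫⁻ w in A, (‖F w‖₊ : ℝ≥0∞) ∂μ + ∫⁻ w in Aᶜ, (‖F w‖₊ : ℝ≥0∞) ∂μ :=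
        (lintegral_add_compl _ hA).symm
    _ ≤ ENNReal.ofReal 1 + ENNReal.ofReal (1 + M ^ 2) := add_le_add hApart hcompl
    _ = ENNReal.ofReal (2 + M ^ 2) := by
        rw [← ENNReal.ofReal_add (by norm_num) (by positivity)]
        congr 1
        ring

/-- **Theorem 4.2 of the paper.** Let `U_λ = I_W + λu`, `u ∈ L²_a(μ,H)`, with `U_λ`
a.s. invertible for `λ < 1` (equivalently `E[L_λ log L_λ] = (λ²/2)E[|u|²_H]`), the
densities `L_λ` converging in probability to `L₁` as `λ → 1` and `{L_λ log L_λ : λ < 1}`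
uniformly integrable.  Then `E[L₁ log L₁] = ½E[|u|²_H]` and hence `U₁ = I_W + u` is
a.s. invertible. -/
theorem invertibility_by_limit
    (d : ℕ) (μ : Measure (WPath d)) [IsProbabilityMeasure μ]
    (udot : ℝ → WPath d → EuclideanSpace ℝ (Fin d))
    (hum : Measurable (Function.uncurry udot))
    (en : WPath d → ℝ) (hen : ∀ w, en w = ∫ s in (0:ℝ)..1, ‖udot s w‖ ^ 2)
    (hu2 : Integrable en μ)
    -- U_λ = I_W + λ u
    (U : ℝ → WPath d → WPath d)
    (hUdef : ∀ l w t, U l w t = w t + ∫ s in (0:ℝ)..t, l • udot s w)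
    (hUmeas : ∀ l, Measurable (U l))
    (L : ℝ → WPath d → ℝ) (hLm : ∀ l, Measurable (L l)) (hLnn : ∀ l, 0 ≤ L l)
    (hpush : ∀ l ∈ Set.Icc (0:ℝ) 1,
      Measure.map (U l) μ = μ.withDensity (fun w => ENNReal.ofReal (L l w)))
    -- U_λ is a.s. invertible for λ < 1
    (hinv : ∀ l ∈ Set.Ico (0:ℝ) 1, AlmostSurelyInvertible μ (U l))
    -- for λ < 1, invertibility is equivalent to the entropy identity
    (hident : ∀ l ∈ Set.Ico (0:ℝ) 1, AlmostSurelyInvertible μ (U l) ↔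
      ∫ w, L l w * Real.log (L l w) ∂μ = (l ^ 2 / 2) * ∫ w, en w ∂μ)
    -- the converse criterion at λ = 1
    (hcrit : (∫ w, L 1 w * Real.log (L 1 w) ∂μ = (1 / 2) * ∫ w, en w ∂μ) →
      AlmostSurelyInvertible μ (U 1))
    -- L_λ → L₁ in probability as λ → 1⁻
    (hLconv : ∀ lseq : ℕ → ℝ, (∀ n, lseq n ∈ Set.Ico (0:ℝ) 1) →
      Tendsto lseq atTop (nhds 1) →
      TendstoInMeasure μ (fun n => L (lseq n)) atTop (L 1))
    -- {L_λ log L_λ : λ < 1} is uniformly integrable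
    (hui : ∀ ε : ℝ, 0 < ε → ∃ δ : ℝ, 0 < δ ∧ ∀ l ∈ Set.Ico (0:ℝ) 1,
      ∀ s : Set (WPath d), MeasurableSet s → μ s ≤ ENNReal.ofReal δ →
        ∫ w in s, |L l w * Real.log (L l w)| ∂μ ≤ ε) :
    (∫ w, L 1 w * Real.log (L 1 w) ∂μ = (1 / 2) * ∫ w, en w ∂μ)
    ∧ AlmostSurelyInvertible μ (U 1) := by
  classical
  set E : ℝ := ∫ w, en w ∂μ with hEdef
  set F : ℝ → WPath d → ℝ := fun l w => L l w * Real.log (L l w) with hFdef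
  have hFm : ∀ l, Measurable (F l) := fun l =>
    (hLm l).mul (Real.measurable_log.comp (hLm l))
  -- mass condition
  have hmass : ∀ l ∈ Set.Icc (0:ℝ) 1, ∫⁻ w, ENNReal.ofReal (L l w) ∂μ = 1 := by
    intro l hl
    have h1 : (Measure.map (U l) μ) Set.univ = 1 := by
      rw [Measure.map_apply (hUmeas l) MeasurableSet.univ]
      simp
    rwa [hpush l hl, withDensity_apply _ MeasurableSet.univ, Measure.restrict_univ] at h1
  -- uniform L¹ bound for λ < 1
  obtain ⟨δ, hδpos, hδ⟩ := hui 1 one_pos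
  set M : ℝ := max (1 / δ) 1 with hMdef
  have hM1 : (1:ℝ) ≤ M := le_max_right _ _
  have hMpos : (0:ℝ) < M := lt_of_lt_of_le one_pos hM1
  have hMδ : 1 / M ≤ δ := by
    have h1 : 1 / δ ≤ M := le_max_left _ _
    rw [div_le_iff₀ hMpos]
    calc (1:ℝ) = δ * (1 / δ) := by field_simp
      _ ≤ δ * M := by gcongr
  set C : ℝ≥0∞ := ENNReal.ofReal (2 + M ^ 2) with hCdef
  have hbound : ∀ l ∈ Set.Ico (0:ℝ) 1, ∫⁻ w, (‖F l w‖₊ : ℝ≥0∞) ∂μ ≤ C := by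
    intro l hl
    exact lintegral_nnnorm_mul_log_le_aux μ (L l) (hLm l) (fun w => hLnn l w)
      (hmass l ⟨hl.1, hl.2.le⟩) hM1 hMδ (fun s hs hμs => hδ l hl s hs hμs)
  have hint : ∀ l ∈ Set.Ico (0:ℝ) 1, Integrable (F l) μ := by
    intro l hl
    exact ⟨(hFm l).aestronglyMeasurable, lt_of_le_of_lt (hbound l hl) ENNReal.ofReal_lt_top⟩
  -- the sequence λ_n = 1 - 1/(n+1)
  set lseq : ℕ → ℝ := fun n => 1 - 1 / ((n : ℝ) + 1) with hlseqdef
  have hlmem : ∀ n, lseq n ∈ Set.Ico (0:ℝ) 1 := by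
    intro n
    have hpos : (0:ℝ) < (n : ℝ) + 1 := by positivity
    constructor
    · have h1 : 1 / ((n:ℝ) + 1) ≤ 1 := by
        rw [div_le_one hpos]
        have hn : (0:ℝ) ≤ (n:ℝ) := Nat.cast_nonneg n
        linarith
      simp only [hlseqdef]
      linarith
    · have h2 : 0 < 1 / ((n:ℝ) + 1) := by positivity
      simp only [hlseqdef]
      linarith
  have hltend : Tendsto lseq atTop (nhds (1:ℝ)) := by
    have h1 := tendsto_one_div_add_atTop_nhds_zero_nat (𝕜 := ℝ)
    have h2 : Tendsto (fun n : ℕ => 1 - 1 / ((n:ℝ) + 1)) atTop (nhds (1 - 0)) :=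
      tendsto_const_nhds.sub h1
    simpa [hlseqdef, one_div] using h2
  -- extract an a.e. convergent subsequence
  obtain ⟨ms, hms_mono, hms_ae⟩ := (hLconv lseq hlmem hltend).exists_seq_tendsto_ae
  set fseq : ℕ → WPath d → ℝ := fun i => F (lseq (ms i)) with hfseqdef
  have hfseq_meas : ∀ i, AEStronglyMeasurable (fseq i) μ := fun i =>
    (hFm _).aestronglyMeasurable
  have hfseq_int : ∀ i, Integrable (fseq i) μ := fun i => hint _ (hlmem _)
  have hae : ∀ᵐ w ∂μ, Tendsto (fun i => fseq i w) atTop (nhds (F 1 w)) := by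
    filter_upwards [hms_ae] with w hw
    exact (Real.continuous_mul_log.tendsto (L 1 w)).comp hw
  have hTIM : TendstoInMeasure μ fseq atTop (F 1) :=
    tendstoInMeasure_of_tendsto_ae hfseq_meas hae
  -- the limit is integrable (Fatou)
  have hgbound : ∫⁻ w, (‖F 1 w‖₊ : ℝ≥0∞) ∂μ ≤ C := by
    have hle : ∀ᵐ w ∂μ, (‖F 1 w‖₊ : ℝ≥0∞)
        = liminf (fun i => (‖fseq i w‖₊ : ℝ≥0∞)) atTop := by
      filter_upwards [hae] with w hw
      have h1 : Tendsto (fun i => (‖fseq i w‖₊ : ℝ≥0∞)) atTop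
          (nhds ((‖F 1 w‖₊ : ℝ≥0∞))) :=
        ENNReal.tendsto_coe.2 ((continuous_nnnorm.tendsto _).comp hw)
      exact h1.liminf_eq.symm
    calc ∫⁻ w, (‖F 1 w‖₊ : ℝ≥0∞) ∂μ
        = ∫⁻ w, liminf (fun i => (‖fseq i w‖₊ : ℝ≥0∞)) atTop ∂μ := lintegral_congr_ae hle
      _ ≤ liminf (fun i => ∫⁻ w, (‖fseq i w‖₊ : ℝ≥0∞) ∂μ) atTop :=
          lintegral_liminf_le fun i => (hFm _).nnnorm.coe_nnreal_ennreal
      _ ≤ C := by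
          have h2 := Filter.liminf_le_liminf
            (Filter.Eventually.of_forall fun i => hbound (lseq (ms i)) (hlmem (ms i)))
            (f := atTop (α := ℕ))
          simpa [Filter.liminf_const] using h2
  have hgmem : MemLp (F 1) 1 μ := by
    refine ⟨(hFm 1).aestronglyMeasurable, ?_⟩
    rw [eLpNorm_one_eq_lintegral_enorm]
    exact lt_of_le_of_lt hgbound ENNReal.ofReal_lt_top
  have hgint : Integrable (F 1) μ := memLp_one_iff_integrable.1 hgmem
  -- uniform integrability in the sense of mathlib
  have hUI : UnifIntegrable fseq 1 μ := by
    intro ε hε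
    obtain ⟨δ', hδ'pos, hδ'⟩ := hui ε hε
    refine ⟨δ', hδ'pos, fun i s hs hμs => ?_⟩
    rw [eLpNorm_indicator_eq_eLpNorm_restrict hs, eLpNorm_one_eq_lintegral_enorm,
      ← ofReal_integral_norm_eq_lintegral_enorm ((hfseq_int i).restrict)]
    refine ENNReal.ofReal_le_ofReal ?_
    simpa only [Real.norm_eq_abs] using hδ' (lseq (ms i)) (hlmem (ms i)) s hs hμs
  -- Vitali convergence theorem
  have hLp : Tendsto (fun i => eLpNorm (fseq i - F 1) 1 μ) atTop (nhds 0) :=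
    tendsto_Lp_finite_of_tendstoInMeasure le_rfl ENNReal.one_ne_top hfseq_meas hgmem hUI hTIM
  -- convergence of the integrals
  have hIconv : Tendsto (fun i => ∫ w, fseq i w ∂μ) atTop (nhds (∫ w, F 1 w ∂μ)) := by
    rw [tendsto_iff_norm_sub_tendsto_zero]
    have hb : ∀ i, ‖∫ w, fseq i w ∂μ - ∫ w, F 1 w ∂μ‖
        ≤ (eLpNorm (fseq i - F 1) 1 μ).toReal := by
      intro i
      have h1 : ENNReal.ofReal (∫ w, ‖fseq i w - F 1 w‖ ∂μ)
          = ∫⁻ w, ‖(fseq i - F 1) w‖ₑ ∂μ :=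
        ofReal_integral_norm_eq_lintegral_enorm ((hfseq_int i).sub hgint)
      have h2 : (eLpNorm (fseq i - F 1) 1 μ).toReal = ∫ w, ‖fseq i w - F 1 w‖ ∂μ := by
        rw [eLpNorm_one_eq_lintegral_enorm, ← h1,
          ENNReal.toReal_ofReal (integral_nonneg fun w => norm_nonneg _)]
      rw [h2, ← integral_sub (hfseq_int i) hgint]
      exact norm_integral_le_integral_norm _
    have h0 : Tendsto (fun i => (eLpNorm (fseq i - F 1) 1 μ).toReal) atTop (nhds 0) := by
      have h := (ENNReal.tendsto_toReal ENNReal.zero_ne_top).comp hLp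
      simpa [Function.comp_def] using h
    exact squeeze_zero (fun i => norm_nonneg _) hb h0
  -- explicit values of the integrals along the sequence
  have hval : ∀ i, ∫ w, fseq i w ∂μ = ((lseq (ms i)) ^ 2 / 2) * E := fun i =>
    (hident _ (hlmem _)).1 (hinv _ (hlmem _))
  have hlim2 : Tendsto (fun i => ∫ w, fseq i w ∂μ) atTop (nhds ((1:ℝ) ^ 2 / 2 * E)) := by
    have h1 : Tendsto (fun i => lseq (ms i)) atTop (nhds 1) :=
      hltend.comp hms_mono.tendsto_atTop
    have h2 : Continuous fun x : ℝ => x ^ 2 / 2 * E :=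
      (((continuous_pow 2).div_const 2).mul continuous_const)
    have h3 := (h2.tendsto 1).comp h1
    simp only [Function.comp_def] at h3 ⊢
    simpa [hval] using h3
  have hfinal : ∫ w, F 1 w ∂μ = 1 / 2 * E := by
    have h := tendsto_nhds_unique hIconv hlim2
    rw [h]; norm_num
  exact ⟨hfinal, hcrit hfinal⟩
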